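/- Let η be a quasi-Kähler torsion-type tensor on (V,J) satisfying the almost Kähler condition, let V = D₁ ⊕ D₂ be an orthogonal direct sum of J-invariant subspaces, and let R̄ : V×V → End(V) be a bilinear map such that: each R̄(x,y) is skew-symmetric and commutes with J; R̄(x,y)(D_i) ⊆ D_i for i = 1,2 and all x,y ∈ V; and the simplified first Bianchi identity σ_{x,y,z}[R̄(x,y)z + T_{T_x y} z] = 0 holds for all x,y,z ∈ V. Then: (i) η_v(T_x y) = 0 for all v ∈ D₁ and x,y ∈ D₂; and (ii) ⟨R̄(v,w)x, y⟩ = −⟨T_{T_w x} v + T_{T_x v} w, y⟩ for all v,w ∈ D₁ and x,y ∈ D₂. (This is the algebraic form of Lemma 4.4 for an AK₃-manifold with a ∇̄-parallel orthogonal J-invariant splitting TM = D₁ ⊕ D₂, R̄ being the curvature of the first canonical Hermitian connection.) -/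
import Mathlib


open scoped InnerProductSpace

/-- Algebraic form of Lemma 4.4. For an orthogonal J-invariant splitting
`V = D₁ ⊕ D₂` preserved by a curvature-type map R̄ satisfying the simplified first
Bianchi identity, one has (i) `η_v (T x y) = 0` for `v ∈ D₁`, `x, y ∈ D₂`, and
(ii) `⟪R̄(v,w) x, y⟫ = -⟪T (T w x) v + T (T x v) w, y⟫` for `v, w ∈ D₁`, `x, y ∈ D₂`. -/
theorem lemma_4_4
    {V : Type*} [NormedAddCommGroup V] [InnerProductSpace ℝ V] [FiniteDimensional ℝ V]
    (J : V →ₗ[ℝ] V)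
    (hJiso : ∀ x y : V, ⟪J x, J y⟫_ℝ = ⟪x, y⟫_ℝ)
    (hJJ : ∀ x : V, J (J x) = -x)
    (η : V →ₗ[ℝ] V →ₗ[ℝ] V)
    (hskew : ∀ x y z : V, ⟪η x y, z⟫_ℝ = -⟪y, η x z⟫_ℝ)
    (hanti : ∀ x y : V, η x (J y) = -J (η x y))
    (hQK : ∀ x y : V, η (J x) (J y) = -η x y)
    (T : V → V → V) (hT : ∀ x y : V, T x y = η x y - η y x)
    (hAK : ∀ x y z : V, ⟪T x y, z⟫_ℝ = -⟪η z x, y⟫_ℝ)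
    (D₁ D₂ : Submodule ℝ V)
    (horth : ∀ v ∈ D₁, ∀ w ∈ D₂, ⟪v, w⟫_ℝ = 0)
    (hspan : D₁ ⊔ D₂ = ⊤)
    (hJ1 : ∀ v ∈ D₁, J v ∈ D₁)
    (hJ2 : ∀ v ∈ D₂, J v ∈ D₂)
    (Rbar : V →ₗ[ℝ] V →ₗ[ℝ] V →ₗ[ℝ] V)
    (hRskew : ∀ x y z u : V, ⟪Rbar x y z, u⟫_ℝ = -⟪z, Rbar x y u⟫_ℝ)
    (hRJ : ∀ x y z : V, Rbar x y (J z) = J (Rbar x y z))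
    (hRD1 : ∀ x y : V, ∀ v ∈ D₁, Rbar x y v ∈ D₁)
    (hRD2 : ∀ x y : V, ∀ v ∈ D₂, Rbar x y v ∈ D₂)
    (hBianchi : ∀ x y z : V,
      (Rbar x y z + T (T x y) z) + (Rbar y z x + T (T y z) x) +
        (Rbar z x y + T (T z x) y) = 0) :
    (∀ v ∈ D₁, ∀ x ∈ D₂, ∀ y ∈ D₂, η v (T x y) = 0) ∧
    (∀ v ∈ D₁, ∀ w ∈ D₁, ∀ x ∈ D₂, ∀ y ∈ D₂,
      ⟪Rbar v w x, y⟫_ℝ = -⟪T (T w x) v + T (T x v) w, y⟫_ℝ) := by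
  -- `J` of `J` inverse trick
  have hJJ' : ∀ a : V, J (-(J a)) = a := by
    intro a; rw [map_neg, hJJ, neg_neg]
  -- η (J a) b = -J (η a b)
  have hηJl : ∀ a b : V, η (J a) b = -J (η a b) := by
    intro a b
    have h1 : η (J a) b = η (J a) (J (-(J b))) := by rw [hJJ' b]
    rw [h1, hQK a (-(J b)), map_neg, neg_neg, hanti]
  -- T relations with J
  have hTl : ∀ a b : V, T (J a) b = -J (T a b) := by
    intro a b
    rw [hT, hT, hηJl, hanti, map_sub]
    abel
  have hTr : ∀ a b : V, T a (J b) = -J (T a b) := by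
    intro a b
    rw [hT, hT, hηJl, hanti, map_sub]
    abel
  -- T is linear-ish in first argument under negation
  have hTnegl : ∀ a b : V, T (-a) b = -(T a b) := by
    intro a b
    rw [hT, hT, map_neg, map_neg, LinearMap.neg_apply]
    abel
  -- inner product and J
  have hJinner : ∀ a b : V, ⟪J a, b⟫_ℝ = -⟪a, J b⟫_ℝ := by
    intro a b
    have h1 : ⟪J a, b⟫_ℝ = ⟪J a, J (-(J b))⟫_ℝ := by rw [hJJ' b]
    rw [h1, hJiso, inner_neg_right]
  -- Key lemma: under orthogonality of R-terms, ⟪T (T x y) z, v⟫ = 0 for all z.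
  have key : ∀ v x y : V,
      (∀ a b : V, ⟪Rbar a b x, v⟫_ℝ = 0) →
      (∀ a b : V, ⟪Rbar a b y, v⟫_ℝ = 0) →
      (∀ a b : V, ⟪Rbar a b x, J v⟫_ℝ = 0) →
      (∀ a b : V, ⟪Rbar a b y, J v⟫_ℝ = 0) →
      ∀ z : V, ⟪T (T x y) z, v⟫_ℝ = 0 := by
    intro v x y hRxv hRyv hRxJv hRyJv z
    -- Identity (I): Bianchi (x,y,z) paired with v
    have hI : ⟪Rbar x y z, v⟫_ℝ + ⟪T (T x y) z, v⟫_ℝ + ⟪T (T y z) x, v⟫_ℝ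
        + ⟪T (T z x) y, v⟫_ℝ = 0 := by
      have h0 : ⟪(Rbar x y z + T (T x y) z) + (Rbar y z x + T (T y z) x) +
          (Rbar z x y + T (T z x) y), v⟫_ℝ = 0 := by
        rw [hBianchi x y z]; exact inner_zero_left _
      simp only [inner_add_left] at h0
      rw [hRxv y z, hRyv z x] at h0
      linarith
    -- Identity (II): Bianchi (x,y,Jz) paired with Jv
    have hII : ⟪Rbar x y z, v⟫_ℝ - ⟪T (T x y) z, v⟫_ℝ + ⟪T (T y z) x, v⟫_ℝ
        + ⟪T (T z x) y, v⟫_ℝ = 0 := by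
      have h0 : ⟪(Rbar x y (J z) + T (T x y) (J z)) + (Rbar y (J z) x + T (T y (J z)) x) +
          (Rbar (J z) x y + T (T (J z) x) y), (J v)⟫_ℝ = 0 := by
        rw [hBianchi x y (J z)]; exact inner_zero_left _
      simp only [inner_add_left] at h0
      have e1 : ⟪Rbar x y (J z), J v⟫_ℝ = ⟪Rbar x y z, v⟫_ℝ := by
        rw [hRJ, hJiso]
      have e2 : ⟪T (T x y) (J z), J v⟫_ℝ = -⟪T (T x y) z, v⟫_ℝ := by
        rw [hTr, inner_neg_left, hJiso]
      have e3 : ⟪Rbar y (J z) x, J v⟫_ℝ = 0 := hRxJv y (J z)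
      have e4 : ⟪T (T y (J z)) x, J v⟫_ℝ = ⟪T (T y z) x, v⟫_ℝ := by
        rw [hTr y z, hTnegl, hTl, neg_neg, hJiso]
      have e5 : ⟪Rbar (J z) x y, J v⟫_ℝ = 0 := hRyJv (J z) x
      have e6 : ⟪T (T (J z) x) y, J v⟫_ℝ = ⟪T (T z x) y, v⟫_ℝ := by
        rw [hTl z x, hTnegl, hTl, neg_neg, hJiso]
      rw [e1, e2, e3, e4, e5, e6] at h0
      linarith
    linarith
  -- Part (i)
  have part1 : ∀ v ∈ D₁, ∀ x ∈ D₂, ∀ y ∈ D₂, η v (T x y) = 0 := by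
    intro v hv x hx y hy
    have hJv : J v ∈ D₁ := hJ1 v hv
    have hRxv : ∀ a b : V, ⟪Rbar a b x, v⟫_ℝ = 0 := fun a b => by
      rw [real_inner_comm]; exact horth v hv _ (hRD2 a b x hx)
    have hRyv : ∀ a b : V, ⟪Rbar a b y, v⟫_ℝ = 0 := fun a b => by
      rw [real_inner_comm]; exact horth v hv _ (hRD2 a b y hy)
    have hRxJv : ∀ a b : V, ⟪Rbar a b x, J v⟫_ℝ = 0 := fun a b => by
      rw [real_inner_comm]; exact horth _ hJv _ (hRD2 a b x hx)
    have hRyJv : ∀ a b : V, ⟪Rbar a b y, J v⟫_ℝ = 0 := fun a b => by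
      rw [real_inner_comm]; exact horth _ hJv _ (hRD2 a b y hy)
    have hkey := key v x y hRxv hRyv hRxJv hRyJv
    -- ⟪η v (T x y), z⟫ = 0 for all z
    have hz : ∀ z : V, ⟪η v (T x y), z⟫_ℝ = 0 := by
      intro z
      have := hAK (T x y) z v
      rw [hkey z] at this
      linarith
    have := hz (η v (T x y))
    exact inner_self_eq_zero.mp this
  refine ⟨part1, ?_⟩
  -- Part (ii)
  intro v hv w hw x hx y hy
  have hJy : J y ∈ D₂ := hJ2 y hy
  have hRvy : ∀ a b : V, ⟪Rbar a b v, y⟫_ℝ = 0 := fun a b =>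
    horth _ (hRD1 a b v hv) y hy
  have hRwy : ∀ a b : V, ⟪Rbar a b w, y⟫_ℝ = 0 := fun a b =>
    horth _ (hRD1 a b w hw) y hy
  have hRvJy : ∀ a b : V, ⟪Rbar a b v, J y⟫_ℝ = 0 := fun a b =>
    horth _ (hRD1 a b v hv) _ hJy
  have hRwJy : ∀ a b : V, ⟪Rbar a b w, J y⟫_ℝ = 0 := fun a b =>
    horth _ (hRD1 a b w hw) _ hJy
  have hkey := key y v w hRvy hRwy hRvJy hRwJy
  -- Bianchi (x, v, w) paired with y
  have h0 : ⟪(Rbar x v w + T (T x v) w) + (Rbar v w x + T (T v w) x) +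
      (Rbar w x v + T (T w x) v), y⟫_ℝ = 0 := by
    rw [hBianchi x v w]; exact inner_zero_left _
  simp only [inner_add_left] at h0
  have e1 : ⟪Rbar x v w, y⟫_ℝ = 0 := horth _ (hRD1 x v w hw) y hy
  have e2 : ⟪Rbar w x v, y⟫_ℝ = 0 := horth _ (hRD1 w x v hv) y hy
  have e3 : ⟪T (T v w) x, y⟫_ℝ = 0 := hkey x
  rw [e1, e2, e3] at h0
  rw [inner_add_left]
  linarith
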